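/- arXiv:2104.05141 — 3 statements merged into one kernel-verified Lean document; each statement's English description precedes it below -/
import Mathlib

section
/- Let Γ be a finitely generated self-simulable group with decidable word problem. Then the sunny-side up subshift X_{≤1} = {x ∈ {0,1}^Γ : if x(g) = x(h) = 1 then g = h} is a sofic Γ-subshift. -/
open scoped Pointwise

namespace SelfSim

/-- The left shift action of a group `G` on the full shift `G → A`:
`(g · x)(h) = x (g⁻¹ h)`. -/
def shift {G A : Type*} [Group G] (g : G) (x : G → A) : G → A := fun h => x (g⁻¹ * h)

/-- A `G`-subshift: a closed, shift-invariant subset of the full shift `G → A`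
(`A` carrying its topology, `G → A` the product topology). -/
def IsSubshift {G A : Type*} [Group G] [TopologicalSpace A] (X : Set (G → A)) : Prop :=
  IsClosed X ∧ ∀ (g : G) (x : G → A), x ∈ X → shift g x ∈ X

/-- A subshift of finite type: there are a finite set `F ⊆ G` and a set `𝓛` of patterns
on `F` such that `x ∈ X` iff every translate of `x` restricted to `F` lies in `𝓛`. -/
def IsSFT {G A : Type*} [Group G] (X : Set (G → A)) : Prop :=
  ∃ (F : Finset G) (L : Set (↥F → A)),
    ∀ x : G → A, x ∈ X ↔ ∀ g : G, (fun h : ↥F => x (g * (h : G))) ∈ L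

/-- `φ` is a topological factor map from the shift action on `Z ⊆ G → A` onto the
action `act` of `G` on `Y ⊆ β`: continuous on `Z`, mapping `Z` into and onto `Y`,
and equivariant. -/
def IsFactorMapOnto {G A β : Type*} [Group G] [TopologicalSpace A] [TopologicalSpace β]
    (Z : Set (G → A)) (φ : (G → A) → β) (act : G → β → β) (Y : Set β) : Prop :=
  ContinuousOn φ Z ∧ Set.MapsTo φ Z Y ∧ Set.SurjOn φ Z Y ∧
    ∀ (g : G) (x : G → A), x ∈ Z → φ (shift g x) = act g (φ x)

/-- A sofic subshift: a topological factor of some subshift of finite type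
(over some finite alphabet, which we may take to be `Fin k`). -/
def IsSofic {G A : Type*} [Group G] [TopologicalSpace A] (Y : Set (G → A)) : Prop :=
  ∃ (k : ℕ) (Z : Set (G → Fin k)) (φ : (G → Fin k) → (G → A)),
    IsSFT Z ∧ IsFactorMapOnto Z φ shift Y

/-- Recursively enumerable predicate. -/
def RE {α : Type*} [Primcodable α] (p : α → Prop) : Prop :=
  Partrec fun a => Part.assert (p a) fun _ => Part.some ()

/-- `x : ℕ → A` begins with the finite word `w`. -/
def ExtendsWord {A : Type*} (x : ℕ → A) (w : List A) : Prop :=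
  ∀ i : Fin w.length, x i = w.get i

/-- A closed subset `Z ⊆ A^ℕ` is effectively closed if the set of words whose
cylinder is disjoint from `Z` is recursively enumerable. -/
def EffectivelyClosedSet {A : Type*} [Primcodable A] [TopologicalSpace A]
    (Z : Set (ℕ → A)) : Prop :=
  IsClosed Z ∧ RE fun w : List A => ∀ x : ℕ → A, ExtendsWord x w → x ∉ Z

/-- `act` defines an action of `G` on the set `X ⊆ β`. -/
def IsActionOn {G β : Type*} [Group G] (act : G → β → β) (X : Set β) : Prop :=
  (∀ g : G, Set.MapsTo (act g) X X) ∧ (∀ x ∈ X, act 1 x = x) ∧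
    ∀ (g h : G) (x : β), x ∈ X → act (g * h) x = act g (act h x)

/-- The set representation of the action `act` of `G` on `X ⊆ A^ℕ` with respect to the
finite generating tuple `s : Fin m → G` (playing the role of the generating set `S`):
the set of `y ∈ (A^S)^ℕ` of the form `y(n)(s) = (s · x)(n)` for some `x ∈ X`. -/
def SetRep {G A : Type*} [Group G] {m : ℕ} (s : Fin m → G)
    (act : G → (ℕ → A) → ℕ → A) (X : Set (ℕ → A)) : Set (ℕ → (Fin m → A)) :=
  {y | ∃ x ∈ X, ∀ i : Fin m, (fun n => y n i) = act (s i) x}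

/-- The action `act` of `G` on the closed set `X ⊆ A^ℕ` is effectively closed with respect
to the finite generating tuple `s` (which contains `1` and generates `G` as a monoid):
its set representation is an effectively closed subset of `(A^S)^ℕ`. -/
def IsEffClosedActionWith {G A : Type*} [Group G] [Primcodable A] [TopologicalSpace A]
    {m : ℕ} (s : Fin m → G) (act : G → (ℕ → A) → ℕ → A) (X : Set (ℕ → A)) : Prop :=
  IsClosed X ∧ IsActionOn act X ∧ (∃ i, s i = 1) ∧
    Submonoid.closure (Set.range s) = ⊤ ∧
    EffectivelyClosedSet (SetRep s act X)

/-- The action `act` of `G` on `X ⊆ A^ℕ` is effectively closed (with respect to some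
finite generating set containing `1`). -/
def IsEffClosedAction {G A : Type*} [Group G] [Primcodable A] [TopologicalSpace A]
    (act : G → (ℕ → A) → ℕ → A) (X : Set (ℕ → A)) : Prop :=
  ∃ (m : ℕ) (s : Fin m → G), IsEffClosedActionWith s act X

/-- The action `act` of `G` on `X ⊆ A^ℕ` is a topological factor of some `G`-subshift
of finite type. -/
def IsFactorOfSFT {G A : Type*} [Group G] [TopologicalSpace A]
    (act : G → (ℕ → A) → ℕ → A) (X : Set (ℕ → A)) : Prop :=
  ∃ (k : ℕ) (Z : Set (G → Fin k)) (φ : (G → Fin k) → (ℕ → A)),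
    IsSFT Z ∧ IsFactorMapOnto Z φ act X

/-- A group `G` is (dynamically) self-simulable if every effectively closed action of `G`
on a closed subset of `{0,1}^ℕ` is a topological factor of a `G`-subshift of finite type. -/
def SelfSimulable (G : Type*) [Group G] : Prop :=
  ∀ (X : Set (ℕ → Bool)) (act : G → (ℕ → Bool) → ℕ → Bool),
    IsEffClosedAction act X → IsFactorOfSFT act X

/-- Amenability via the Følner condition: for every finite `K` and `δ > 0` there is a
nonempty finite `F` with `|KF △ F| ≤ δ |F|`. -/
def Amenable (G : Type*) [Group G] : Prop :=
  ∀ K : Set G, K.Finite → ∀ δ : ℝ, 0 < δ →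
    ∃ F : Set G, F.Finite ∧ F.Nonempty ∧
      ((symmDiff (K * F) F).ncard : ℝ) ≤ δ * F.ncard

/-- A finitely generated group is recursively presented: for some finite tuple generating
`G` as a monoid, the set of words evaluating to the identity is recursively enumerable. -/
def RecursivelyPresented (G : Type*) [Group G] : Prop :=
  ∃ (m : ℕ) (s : Fin m → G), Submonoid.closure (Set.range s) = ⊤ ∧
    RE fun w : List (Fin m) => (w.map s).prod = 1

/-- A finitely generated group has decidable word problem: for some finite tuple generating
`G` as a monoid, the set of words evaluating to the identity is decidable. -/
def DecidableWordProblem (G : Type*) [Group G] : Prop :=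
  ∃ (m : ℕ) (s : Fin m → G), Submonoid.closure (Set.range s) = ⊤ ∧
    ComputablePred fun w : List (Fin m) => (w.map s).prod = 1

/-- A pattern coding `c` (a finite list of pairs (word over the generators, letter))
holds in the configuration `x` at position `g`: `x (g ⬝ w̲) = a` for every pair `(w, a)`
of `c`. This says exactly that `x ∈ g·[c]`. -/
def PCHolds {G A : Type*} [Group G] {m : ℕ} (s : Fin m → G) (x : G → A) (g : G)
    (c : List (List (Fin m) × A)) : Prop :=
  ∀ p ∈ c, x (g * (p.1.map s).prod) = p.2

/-- A `G`-subshift `X ⊆ A^G` is effectively closed by patterns: for some finite generating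
tuple `s`, there is a recursively enumerable set `𝒞` of pattern codings such that `X` is the
set of configurations avoiding every translate of every cylinder `[c]`, `c ∈ 𝒞`. -/
def EffClosedByPatterns {G A : Type*} [Group G] [Primcodable A] (X : Set (G → A)) : Prop :=
  ∃ (m : ℕ) (s : Fin m → G), Submonoid.closure (Set.range s) = ⊤ ∧
    ∃ 𝒞 : Set (List (List (Fin m) × A)), RE (· ∈ 𝒞) ∧
      X = {x : G → A | ∀ (g : G) (c : List (List (Fin m) × A)), c ∈ 𝒞 → ¬ PCHolds s x g c}

/-- Word metric distance associated to a finite tuple `s` generating `G` as a monoid. -/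
noncomputable def wordDist {G : Type*} [Group G] {m : ℕ} (s : Fin m → G) (g h : G) : ℕ :=
  sInf {n : ℕ | ∃ w : List (Fin m), w.length = n ∧ (w.map s).prod = g⁻¹ * h}

/-- Two finitely generated groups are quasi-isometric (with respect to word metrics given
by some finite generating sets). -/
def QuasiIsometric (G₁ G₂ : Type*) [Group G₁] [Group G₂] : Prop :=
  ∃ (m₁ : ℕ) (s₁ : Fin m₁ → G₁) (m₂ : ℕ) (s₂ : Fin m₂ → G₂),
    Submonoid.closure (Set.range s₁) = ⊤ ∧ Submonoid.closure (Set.range s₂) = ⊤ ∧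
    ∃ (f : G₂ → G₁) (A B C : ℝ), 1 ≤ A ∧ 0 ≤ B ∧ 0 ≤ C ∧
      (∀ x y : G₂,
        (1 / A) * (wordDist s₂ x y : ℝ) - B ≤ (wordDist s₁ (f x) (f y) : ℝ) ∧
        (wordDist s₁ (f x) (f y) : ℝ) ≤ A * (wordDist s₂ x y : ℝ) + B) ∧
      ∀ z : G₁, ∃ x : G₂, (wordDist s₁ z (f x) : ℝ) ≤ C

/-- A finitely presented group: a quotient of a finitely generated free group by the
normal closure of finitely many relators. -/
def FinitelyPresentedGroup (G : Type*) [Group G] : Prop :=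
  ∃ (m : ℕ) (f : FreeGroup (Fin m) →* G) (R : Finset (FreeGroup (Fin m))),
    Function.Surjective f ∧ f.ker = Subgroup.normalClosure (R : Set (FreeGroup (Fin m)))

/-- A subgroup `Δ ≤ G` is mediated: there is a finite generating set `T` of `G` such that
`Δ ∩ tΔt⁻¹` is non-amenable for every `t ∈ T`. -/
def Mediated {G : Type*} [Group G] (Δ : Subgroup G) : Prop :=
  ∃ T : Finset G, Subgroup.closure (T : Set G) = ⊤ ∧
    ∀ t ∈ T, ¬ Amenable ↥(Δ ⊓ Subgroup.map (MulAut.conj t).toMonoidHom Δ)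

end SelfSim

namespace SelfSim


section Aux

variable {G : Type*} [Group G]

theorem shift_one' {A : Type*} (x : G → A) : shift 1 x = x := by
  funext h; simp [shift]

theorem shift_mul' {A : Type*} (g g' : G) (x : G → A) :
    shift (g * g') x = shift g (shift g' x) := by
  funext h; simp [shift, mul_assoc]

theorem ssu_closed : IsClosed {x : G → Bool | ∀ g h : G, x g = true → x h = true → g = h} := by
  have : {x : G → Bool | ∀ g h : G, x g = true → x h = true → g = h}
      = ⋂ (g : G), ⋂ (h : G), {x : G → Bool | x g = true → x h = true → g = h} := by
    ext x; simp [Set.mem_iInter]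
  rw [this]
  refine isClosed_iInter fun g => isClosed_iInter fun h => ?_
  by_cases hgh : g = h
  · simp [hgh]
  · have : {x : G → Bool | x g = true → x h = true → g = h}
        = ((fun x : G → Bool => x g) ⁻¹' {true} ∩ (fun x : G → Bool => x h) ⁻¹' {true})ᶜ := by
      ext x
      simp only [Set.mem_setOf_eq, Set.mem_compl_iff, Set.mem_inter_iff, Set.mem_preimage,
        Set.mem_singleton_iff]
      constructor
      · intro hx hc; exact hgh (hx hc.1 hc.2)
      · intro hx h1 h2; exact absurd ⟨h1, h2⟩ hx
    rw [this]
    exact (IsOpen.inter ((continuous_apply g).isOpen_preimage _ (isOpen_discrete _))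
      ((continuous_apply h).isOpen_preimage _ (isOpen_discrete _))).isClosed_compl

theorem ssu_shift (g : G) (x : G → Bool)
    (hx : x ∈ {x : G → Bool | ∀ g h : G, x g = true → x h = true → g = h}) :
    shift g x ∈ {x : G → Bool | ∀ g h : G, x g = true → x h = true → g = h} := by
  intro a b ha hb
  exact mul_left_cancel (hx _ _ ha hb)

theorem exists_word {m : ℕ} {s : Fin m → G} (hgen : Submonoid.closure (Set.range s) = ⊤)
    (g : G) : ∃ w : List (Fin m), (w.map s).prod = g := by
  have hg : g ∈ Submonoid.closure (Set.range s) := by rw [hgen]; trivial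
  obtain ⟨l, hl, hprod⟩ := Submonoid.exists_list_of_mem_closure hg
  suffices h : ∀ l : List G, (∀ y ∈ l, y ∈ Set.range s) → ∃ w : List (Fin m), w.map s = l by
    obtain ⟨w, hw⟩ := h l hl
    exact ⟨w, by rw [hw, hprod]⟩
  intro l
  induction l with
  | nil => intro _; exact ⟨[], rfl⟩
  | cons a t ih =>
    intro hmem
    obtain ⟨i, hi⟩ := hmem a List.mem_cons_self
    obtain ⟨w, hw⟩ := ih fun y hy => hmem y (List.mem_cons_of_mem _ hy)
    exact ⟨i :: w, by simp [hw, hi]⟩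

theorem good_tuple {m : ℕ} {s : Fin m → G}
    (hgen : Submonoid.closure (Set.range s) = ⊤)
    (hcp : ComputablePred fun w : List (Fin m) => (w.map s).prod = 1) :
    ∃ s' : Fin (m + 1) → G, s' 0 = 1 ∧ Submonoid.closure (Set.range s') = ⊤ ∧
      ComputablePred fun w : List (Fin (m + 1)) => (w.map s').prod = 1 := by
  refine ⟨Fin.cons 1 s, rfl, ?_, ?_⟩
  · rw [eq_top_iff, ← hgen]
    refine Submonoid.closure_mono ?_
    rw [Fin.range_cons]
    exact Set.subset_insert _ _
  · set r : List (Fin (m + 1)) → List (Fin m) :=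
      fun w => w.filterMap (fun i => Fin.cases none some i) with hr
    have hred : ∀ w : List (Fin (m + 1)), (w.map (Fin.cons 1 s)).prod = ((r w).map s).prod := by
      intro w
      induction w with
      | nil => rfl
      | cons a t ih =>
        induction a using Fin.cases with
        | zero => simpa [hr, List.filterMap_cons, Fin.cases_zero] using ih
        | succ i => simp [hr, ih]
    obtain ⟨f, hf, hp⟩ := ComputablePred.computable_iff.1 hcp
    have hfr : Computable (fun w => f (r w)) := by
      refine hf.comp ?_
      have : Primrec r := Primrec.listFilterMap Primrec.id
        ((Primrec.dom_finite (fun i : Fin (m+1) => (Fin.cases none some i : Option (Fin m)))).comp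
          Primrec.snd).to₂
      exact this.to_comp
    refine ComputablePred.computable_iff.2 ⟨fun w => f (r w), hfr, ?_⟩
    funext w
    rw [hred w]
    exact congrFun hp (r w)

/-- decoded word -/
def uWord (m : ℕ) (n : ℕ) : List (Fin m) := (Encodable.decode n).getD []

theorem uWord_primrec {m : ℕ} : Primrec (uWord m) :=
  Primrec.option_getD.comp Primrec.decode (Primrec.const [])

theorem uWord_surj {m : ℕ} (w : List (Fin m)) : uWord m (Encodable.encode w) = w := by
  simp [uWord]

def nuMap {m : ℕ} (s : Fin m → G) (n : ℕ) : G := ((uWord m n).map s).prod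

def PhiMap {m : ℕ} (s : Fin m → G) (ξ : G → Bool) : ℕ → Fin m → Bool :=
  fun n i => ξ ((s i)⁻¹ * nuMap s n)

def embMap {m : ℕ} (s : Fin m → G) (x : G → Bool) : ℕ → Bool := fun n => x (nuMap s n)

def actMap {m : ℕ} (s : Fin m → G) (iota : G → ℕ) (g : G) (y : ℕ → Bool) : ℕ → Bool :=
  fun n => y (iota (g⁻¹ * nuMap s n))

def dMap (iota : G → ℕ) (y : ℕ → Bool) : G → Bool := fun g => y (iota g)

def csList {m : ℕ} (inv : Fin m → List (Fin m)) (w : List (Fin m → Bool)) :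
    List (List (Fin m) × Bool) :=
  (List.range w.length).flatMap fun n =>
    (List.finRange m).map fun i => (inv i ++ uWord m n, w.getD n (fun _ => false) i)

theorem csList_primrec {m : ℕ} (inv : Fin m → List (Fin m)) : Primrec (csList inv) := by
  have h1 : Primrec fun q : (List (Fin m → Bool) × ℕ) × Fin m => inv q.2 ++ uWord m q.1.2 :=
    Primrec.list_append.comp ((Primrec.dom_finite inv).comp Primrec.snd)
      (uWord_primrec.comp (Primrec.snd.comp Primrec.fst))
  have h2 : Primrec fun q : (List (Fin m → Bool) × ℕ) × Fin m =>
      q.1.1.getD q.1.2 (fun _ => false) q.2 :=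
    Primrec.fin_app.comp ((Primrec.list_getD (fun _ => false)).comp
      (Primrec.fst.comp Primrec.fst) (Primrec.snd.comp Primrec.fst)) Primrec.snd
  have hg : Primrec fun p : List (Fin m → Bool) × ℕ =>
      (List.finRange m).map fun i => (inv i ++ uWord m p.2, p.1.getD p.2 (fun _ => false) i) :=
    Primrec.list_map (Primrec.const (List.finRange m)) ((h1.pair h2).to₂)
  exact Primrec.list_flatMap (Primrec.list_range.comp Primrec.list_length) hg.to₂

theorem csList_mem {m : ℕ} (inv : Fin m → List (Fin m)) (w : List (Fin m → Bool))
    (q : List (Fin m) × Bool) :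
    q ∈ csList inv w ↔
      ∃ n < w.length, ∃ i : Fin m, q = (inv i ++ uWord m n, w.getD n (fun _ => false) i) := by
  simp only [csList, List.mem_flatMap, List.mem_range, List.mem_map, List.mem_finRange]
  constructor
  · rintro ⟨n, hn, i, _, rfl⟩; exact ⟨n, hn, i, rfl⟩
  · rintro ⟨n, hn, i, rfl⟩; exact ⟨n, hn, i, trivial, rfl⟩

def combineB : Bool × (Bool × (Bool × (Bool × Bool))) → Bool :=
  fun p => p.2.2.2.1 && p.2.2.2.2 && ((p.1 && (p.2.1 != p.2.2.1)) ||
    (p.2.1 && p.2.2.1 && !p.1))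

def conflictF {m : ℕ} (f : List (Fin m) → Bool) (inv : Fin m → List (Fin m))
    (p : List (Fin m → Bool) × ℕ) : Bool :=
  let c := csList inv p.1
  let qa := c.getD (Nat.unpair p.2).1 ([], false)
  let qb := c.getD (Nat.unpair p.2).2 ([], false)
  combineB (f (qa.1 ++ qb.1.reverse.flatMap inv),
    (qa.2, (qb.2, (decide ((Nat.unpair p.2).1 < c.length),
      decide ((Nat.unpair p.2).2 < c.length)))))

theorem conflictF_computable {m : ℕ} {f : List (Fin m) → Bool} (hf : Computable f)
    (inv : Fin m → List (Fin m)) : Computable (conflictF f inv) := by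
  have hcs : Primrec fun p : List (Fin m → Bool) × ℕ => csList inv p.1 :=
    (csList_primrec inv).comp Primrec.fst
  have hua : Primrec fun p : List (Fin m → Bool) × ℕ => (Nat.unpair p.2).1 :=
    Primrec.fst.comp (Primrec.unpair.comp Primrec.snd)
  have hub : Primrec fun p : List (Fin m → Bool) × ℕ => (Nat.unpair p.2).2 :=
    Primrec.snd.comp (Primrec.unpair.comp Primrec.snd)
  have hqa : Primrec fun p : List (Fin m → Bool) × ℕ =>
      (csList inv p.1).getD (Nat.unpair p.2).1 ([], false) :=
    (Primrec.list_getD (([], false) : List (Fin m) × Bool)).comp hcs hua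
  have hqb : Primrec fun p : List (Fin m → Bool) × ℕ =>
      (csList inv p.1).getD (Nat.unpair p.2).2 ([], false) :=
    (Primrec.list_getD (([], false) : List (Fin m) × Bool)).comp hcs hub
  have hinvL : Primrec fun b : List (Fin m) => b.reverse.flatMap inv :=
    Primrec.list_flatMap Primrec.list_reverse
      ((Primrec.dom_finite inv).comp Primrec.snd).to₂
  have hword : Primrec fun p : List (Fin m → Bool) × ℕ =>
      ((csList inv p.1).getD (Nat.unpair p.2).1 ([], false)).1 ++
        (((csList inv p.1).getD (Nat.unpair p.2).2 ([], false)).1.reverse.flatMap inv) :=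
    Primrec.list_append.comp (Primrec.fst.comp hqa) (hinvL.comp (Primrec.fst.comp hqb))
  have hlt : Primrec₂ fun a b : ℕ => decide (a < b) := Primrec.nat_lt.decide
  have hdata : Primrec fun p : List (Fin m → Bool) × ℕ =>
      (((csList inv p.1).getD (Nat.unpair p.2).1 ([], false)).2,
        ((((csList inv p.1).getD (Nat.unpair p.2).2 ([], false)).2,
          (decide ((Nat.unpair p.2).1 < (csList inv p.1).length),
            decide ((Nat.unpair p.2).2 < (csList inv p.1).length))))) :=
    (Primrec.snd.comp hqa).pair ((Primrec.snd.comp hqb).pair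
      ((hlt.comp hua (Primrec.list_length.comp hcs)).pair
        (hlt.comp hub (Primrec.list_length.comp hcs))))
  have hcomb : Primrec combineB := Primrec.dom_finite _
  exact hcomb.to_comp.comp ((hf.comp hword.to_comp).pair hdata.to_comp)

theorem invList_prod {m : ℕ} {s : Fin m → G} {inv : Fin m → List (Fin m)}
    (hinv : ∀ i, ((inv i).map s).prod = (s i)⁻¹) (b : List (Fin m)) :
    (((b.reverse.flatMap inv).map s).prod) = ((b.map s).prod)⁻¹ := by
  induction b with
  | nil => simp
  | cons j t ih =>
    rw [List.reverse_cons, List.flatMap_append, List.map_append, List.prod_append, ih]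
    simp [hinv j, mul_inv_rev]

theorem feq {m : ℕ} {s : Fin m → G} {f : List (Fin m) → Bool}
    (hf : ∀ v : List (Fin m), (v.map s).prod = 1 ↔ f v = true)
    {inv : Fin m → List (Fin m)} (hinv : ∀ i, ((inv i).map s).prod = (s i)⁻¹)
    (a b : List (Fin m)) :
    f (a ++ b.reverse.flatMap inv) = true ↔ (a.map s).prod = (b.map s).prod := by
  rw [← hf, List.map_append, List.prod_append, invList_prod hinv, mul_inv_eq_one]

theorem combineB_eq_true (e d1 d2 ia ib : Bool) :
    combineB (e, (d1, (d2, (ia, ib)))) = true ↔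
      ia = true ∧ ib = true ∧
        ((e = true ∧ d1 ≠ d2) ∨ (d1 = true ∧ d2 = true ∧ e = false)) := by
  simp only [combineB, Bool.and_eq_true, Bool.or_eq_true, bne_iff_ne, Bool.not_eq_true']
  tauto

theorem conflictF_iff {m : ℕ} {s : Fin m → G} {f : List (Fin m) → Bool}
    (hf : ∀ v : List (Fin m), (v.map s).prod = 1 ↔ f v = true)
    {inv : Fin m → List (Fin m)} (hinv : ∀ i, ((inv i).map s).prod = (s i)⁻¹)
    (w : List (Fin m → Bool)) :
    (∃ k, conflictF f inv (w, k) = true) ↔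
      ∃ q ∈ csList inv w, ∃ q' ∈ csList inv w,
        (((q.1.map s).prod = (q'.1.map s).prod ∧ q.2 ≠ q'.2) ∨
          (q.2 = true ∧ q'.2 = true ∧ (q.1.map s).prod ≠ (q'.1.map s).prod)) := by
  constructor
  · rintro ⟨k, hk⟩
    unfold conflictF at hk
    simp only [combineB_eq_true, decide_eq_true_eq] at hk
    obtain ⟨ha, hb, hc⟩ := hk
    set c := csList inv w with hc'
    refine ⟨c.getD (Nat.unpair k).1 ([], false), ?_, c.getD (Nat.unpair k).2 ([], false), ?_, ?_⟩
    · rw [List.getD_eq_getElem c _ ha]; exact List.getElem_mem _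
    · rw [List.getD_eq_getElem c _ hb]; exact List.getElem_mem _
    · rcases hc with ⟨he, hne⟩ | ⟨h1, h2, he⟩
      · exact Or.inl ⟨(feq hf hinv _ _).1 he, hne⟩
      · refine Or.inr ⟨h1, h2, fun heq => ?_⟩
        rw [← feq hf hinv ((c.getD (Nat.unpair k).1 ([], false)).1)
          ((c.getD (Nat.unpair k).2 ([], false)).1)] at heq
        rw [heq] at he
        exact absurd he (by simp)
  · rintro ⟨q, hq, q', hq', hconf⟩
    obtain ⟨a, ha, rfl⟩ := List.mem_iff_getElem.1 hq
    obtain ⟨b, hb, rfl⟩ := List.mem_iff_getElem.1 hq'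
    refine ⟨Nat.pair a b, ?_⟩
    unfold conflictF
    simp only [Nat.unpair_pair]
    rw [List.getD_eq_getElem _ _ ha, List.getD_eq_getElem _ _ hb]
    rw [combineB_eq_true]
    refine ⟨by simpa using ha, by simpa using hb, ?_⟩
    rcases hconf with ⟨he, hne⟩ | ⟨h1, h2, hne⟩
    · exact Or.inl ⟨(feq hf hinv _ _).2 he, hne⟩
    · refine Or.inr ⟨h1, h2, ?_⟩
      rw [← Bool.not_eq_true, feq hf hinv]
      exact hne

theorem key_iff {m : ℕ} {s : Fin m → G} {f : List (Fin m) → Bool}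
    (hf : ∀ v : List (Fin m), (v.map s).prod = 1 ↔ f v = true)
    {inv : Fin m → List (Fin m)} (hinv : ∀ i, ((inv i).map s).prod = (s i)⁻¹)
    (w : List (Fin m → Bool)) :
    (∃ ξ : G → Bool, (∀ a b : G, ξ a = true → ξ b = true → a = b) ∧
        ∀ q ∈ csList inv w, ξ ((q.1.map s).prod) = q.2) ↔
      ¬ ∃ k, conflictF f inv (w, k) = true := by
  rw [conflictF_iff hf hinv]
  constructor
  · rintro ⟨ξ, hX, hsat⟩ ⟨q, hq, q', hq', hconf⟩
    have s1 := hsat q hq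
    have s2 := hsat q' hq'
    rcases hconf with ⟨he, hne⟩ | ⟨h1, h2, hne⟩
    · exact hne (by rw [← s1, ← s2, he])
    · exact hne (hX _ _ (by rw [s1, h1]) (by rw [s2, h2]))
  · intro hno
    classical
    by_cases hT : ∃ q ∈ csList inv w, q.2 = true
    · obtain ⟨q₀, hq₀, h0⟩ := hT
      refine ⟨fun g => decide (g = (q₀.1.map s).prod), ?_, ?_⟩
      · intro a b ha hb
        rw [decide_eq_true_eq] at ha hb
        rw [ha, hb]
      · intro q hq
        cases hq2 : q.2 with
        | true =>
          rw [decide_eq_true_eq]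
          by_contra hne
          exact hno ⟨q, hq, q₀, hq₀, Or.inr ⟨hq2, h0, hne⟩⟩
        | false =>
          rw [decide_eq_false_iff_not]
          intro heq
          exact hno ⟨q, hq, q₀, hq₀, Or.inl ⟨heq, by rw [hq2, h0]; simp⟩⟩
    · push_neg at hT
      exact ⟨fun _ => false, fun a b ha _ => absurd ha (by simp),
        fun q hq => (Bool.eq_false_iff.2 (hT q hq)).symm⟩

theorem prod_constraint {m : ℕ} (s : Fin m → G) {inv : Fin m → List (Fin m)}
    (hinv : ∀ i, ((inv i).map s).prod = (s i)⁻¹) (i : Fin m) (n : ℕ) :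
    (((inv i ++ uWord m n).map s).prod) = (s i)⁻¹ * nuMap s n := by
  rw [List.map_append, List.prod_append, hinv, nuMap]

theorem sat_iff {m : ℕ} {s : Fin m → G} {inv : Fin m → List (Fin m)}
    (hinv : ∀ i, ((inv i).map s).prod = (s i)⁻¹) (ξ : G → Bool)
    (w : List (Fin m → Bool)) :
    (∀ q ∈ csList inv w, ξ ((q.1.map s).prod) = q.2) ↔ ExtendsWord (PhiMap s ξ) w := by
  constructor
  · intro hsat j
    funext i
    have hq : (inv i ++ uWord m (j : ℕ), w.getD (j : ℕ) (fun _ => false) i) ∈ csList inv w :=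
      (csList_mem inv w _).2 ⟨j, j.isLt, i, rfl⟩
    have := hsat _ hq
    rw [prod_constraint s hinv] at this
    rw [show (PhiMap s ξ (j : ℕ) i) = ξ ((s i)⁻¹ * nuMap s (j : ℕ)) from rfl, this,
      List.getD_eq_getElem _ _ j.isLt, List.get_eq_getElem]
  · intro hext q hq
    obtain ⟨n, hn, i, rfl⟩ := (csList_mem inv w q).1 hq
    have h1 := congrFun (hext ⟨n, hn⟩) i
    simp only [PhiMap] at h1
    rw [prod_constraint s hinv, h1, List.get_eq_getElem, List.getD_eq_getElem _ _ hn]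

theorem P_iff {m : ℕ} {s : Fin m → G} {f : List (Fin m) → Bool}
    (hf : ∀ v : List (Fin m), (v.map s).prod = 1 ↔ f v = true)
    {inv : Fin m → List (Fin m)} (hinv : ∀ i, ((inv i).map s).prod = (s i)⁻¹)
    (w : List (Fin m → Bool)) :
    (∀ y : ℕ → Fin m → Bool, ExtendsWord y w →
        ¬ ∃ ξ : G → Bool, (∀ a b : G, ξ a = true → ξ b = true → a = b) ∧ y = PhiMap s ξ) ↔
      ∃ k, conflictF f inv (w, k) = true := by
  constructor
  · intro hP
    by_contra h
    obtain ⟨ξ, hX, hsat⟩ := (key_iff hf hinv w).2 h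
    exact hP (PhiMap s ξ) ((sat_iff hinv ξ w).1 hsat) ⟨ξ, hX, rfl⟩
  · rintro hk y hext ⟨ξ, hX, rfl⟩
    exact (key_iff hf hinv w).1 ⟨ξ, hX, (sat_iff hinv ξ w).2 hext⟩ hk

theorem re_of_exists {α : Type*} [Primcodable α] {F : α × ℕ → Bool} (hF : Computable F)
    {P : α → Prop} (hP : ∀ a, P a ↔ ∃ k, F (a, k) = true) : RE P := by
  have h2 : Computable₂ fun (a : α) (k : ℕ) => F (a, k) :=
    hF.comp (Computable.fst.pair Computable.snd)
  have h1 : Partrec fun a => Nat.rfind fun k => (Part.some (F (a, k)) : Part Bool) :=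
    Partrec.rfind h2.partrec₂
  have h3 : Partrec fun a => (Nat.rfind fun k => (Part.some (F (a, k)) : Part Bool)).map
      fun _ => () := h1.map (Computable.const ()).to₂
  refine h3.of_eq fun a => Part.ext fun u => ?_
  cases u
  simp only [Part.mem_map_iff, Part.mem_assert_iff, Part.mem_some_iff, exists_prop,
    and_true, exists_const]
  constructor
  · rintro ⟨n, hn⟩
    rw [hP]
    exact ⟨n, (Part.mem_some_iff.1 (Nat.rfind_spec hn)).symm⟩
  · intro hpa
    obtain ⟨k, hk⟩ := (hP a).1 hpa
    have hdom : (Nat.rfind fun k => (Part.some (F (a, k)) : Part Bool)).Dom :=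
      Nat.rfind_dom.2 ⟨k, Part.mem_some_iff.2 hk.symm, fun _ => trivial⟩
    exact ⟨_, Part.get_mem hdom⟩

end Aux

/-- For a finitely generated self-simulable group with decidable word problem,
the sunny-side up subshift is sofic. -/
theorem sunnySideUp_isSofic
    (G : Type*) [Group G] (hfg : Group.FG G)
    (hwp : DecidableWordProblem G) (hss : SelfSimulable G) :
    IsSofic {x : G → Bool | ∀ g h : G, x g = true → x h = true → g = h} := by
  classical
  obtain ⟨m₀, s₀, hgen₀, hcp₀⟩ := hwp
  obtain ⟨s, hs0, hgen, hcp⟩ := good_tuple hgen₀ hcp₀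
  set X₁ := {x : G → Bool | ∀ g h : G, x g = true → x h = true → g = h} with hX₁def
  obtain ⟨f, hfcomp, hfp⟩ := ComputablePred.computable_iff.1 hcp
  have hf : ∀ v : List (Fin (m₀ + 1)), (v.map s).prod = 1 ↔ f v = true := fun v =>
    iff_of_eq (congrFun hfp v)
  have hinv' : ∀ i : Fin (m₀ + 1), ∃ v : List (Fin (m₀ + 1)), (v.map s).prod = (s i)⁻¹ := fun i =>
    exists_word hgen _
  choose inv hinv using hinv'
  have hnusurj : Function.Surjective (nuMap s) := by
    intro g
    obtain ⟨w, hw⟩ := exists_word hgen g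
    exact ⟨Encodable.encode w, by rw [nuMap, uWord_surj, hw]⟩
  set iota : G → ℕ := Function.invFun (nuMap s) with hiota_def
  have hiota : ∀ g : G, nuMap s (iota g) = g := fun g => Function.invFun_eq (hnusurj g)
  have hact_emb : ∀ (g : G) (ξ : G → Bool),
      actMap s iota g (embMap s ξ) = embMap s (shift g ξ) := by
    intro g ξ; funext n
    show ξ (nuMap s (iota (g⁻¹ * nuMap s n))) = ξ (g⁻¹ * nuMap s n)
    rw [hiota]
  have hd_emb : ∀ ξ : G → Bool, dMap iota (embMap s ξ) = ξ := by
    intro ξ; funext g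
    show ξ (nuMap s (iota g)) = ξ g
    rw [hiota]
  set X : Set (ℕ → Bool) := embMap s '' X₁ with hXdef
  have hX₁closed : IsClosed X₁ := ssu_closed
  have hX₁compact : IsCompact X₁ := hX₁closed.isCompact
  have hembcont : Continuous (embMap s : (G → Bool) → ℕ → Bool) :=
    continuous_pi fun n => continuous_apply _
  have hXclosed : IsClosed X := (hX₁compact.image hembcont).isClosed
  have hPhicont : Continuous (PhiMap s : (G → Bool) → ℕ → Fin (m₀ + 1) → Bool) :=
    continuous_pi fun n => continuous_pi fun i => continuous_apply _
  have hsetrep : SetRep s (actMap s iota) X = PhiMap s '' X₁ := by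
    ext y
    constructor
    · rintro ⟨x, ⟨ξ, hξ, rfl⟩, hi⟩
      refine ⟨ξ, hξ, ?_⟩
      funext n i
      have h := congrFun (hi i) n
      rw [hact_emb] at h
      exact h.symm
    · rintro ⟨ξ, hξ, rfl⟩
      refine ⟨embMap s ξ, ⟨ξ, hξ, rfl⟩, fun i => ?_⟩
      rw [hact_emb]
      funext n
      rfl
  have hre : RE fun w : List (Fin (m₀ + 1) → Bool) =>
      ∀ y : ℕ → (Fin (m₀ + 1) → Bool), ExtendsWord y w → y ∉ SetRep s (actMap s iota) X := by
    have h0 := re_of_exists (conflictF_computable hfcomp inv) (P_iff hf hinv)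
    have hPQ : (fun w : List (Fin (m₀ + 1) → Bool) => ∀ y : ℕ → Fin (m₀ + 1) → Bool, ExtendsWord y w →
        ¬ ∃ ξ : G → Bool, (∀ a b : G, ξ a = true → ξ b = true → a = b) ∧ y = PhiMap s ξ)
        = fun w : List (Fin (m₀ + 1) → Bool) => ∀ y : ℕ → (Fin (m₀ + 1) → Bool), ExtendsWord y w →
          y ∉ SetRep s (actMap s iota) X := by
      funext w
      refine propext (forall_congr' fun y => imp_congr_right fun _ => not_congr ?_)
      rw [hsetrep]
      constructor
      · rintro ⟨ξ, hξ, rfl⟩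
        exact ⟨ξ, hξ, rfl⟩
      · rintro ⟨ξ, hξ, rfl⟩
        exact ⟨ξ, hξ, rfl⟩
    exact hPQ ▸ h0
  have hactionOn : IsActionOn (actMap s iota) X := by
    refine ⟨fun g => ?_, fun x hx => ?_, fun g h x hx => ?_⟩
    · rintro x ⟨ξ, hξ, rfl⟩
      exact ⟨shift g ξ, ssu_shift g ξ hξ, (hact_emb g ξ).symm⟩
    · obtain ⟨ξ, hξ, rfl⟩ := hx
      rw [hact_emb, shift_one']
    · obtain ⟨ξ, hξ, rfl⟩ := hx
      rw [hact_emb, shift_mul', ← hact_emb, ← hact_emb]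
  have heff : IsEffClosedAction (actMap s iota) X := by
    refine ⟨m₀ + 1, s, hXclosed, hactionOn, ⟨0, hs0⟩, hgen, ?_, hre⟩
    rw [hsetrep]
    exact (hX₁compact.image hPhicont).isClosed
  obtain ⟨k, Z, φ, hSFT, hcont, hmaps, hsurj, hequiv⟩ := hss X (actMap s iota) heff
  have hdcont : Continuous (dMap iota : (ℕ → Bool) → G → Bool) :=
    continuous_pi fun g => continuous_apply (iota g)
  refine ⟨k, Z, fun z => dMap iota (φ z), hSFT, hdcont.comp_continuousOn hcont, ?_, ?_, ?_⟩
  · intro z hz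
    obtain ⟨ξ, hξ, hφ⟩ := hmaps hz
    show dMap iota (φ z) ∈ X₁
    rw [← hφ, hd_emb]
    exact hξ
  · intro ξ hξ
    obtain ⟨z, hz, hφ⟩ := hsurj (⟨ξ, hξ, rfl⟩ : embMap s ξ ∈ X)
    exact ⟨z, hz, show dMap iota (φ z) = ξ by rw [hφ, hd_emb]⟩
  · intro g z hz
    obtain ⟨ξ, hξ, hφ⟩ := hmaps hz
    show dMap iota (φ (shift g z)) = shift g (dMap iota (φ z))
    rw [hequiv g z hz, ← hφ, hact_emb, hd_emb, hd_emb]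

end SelfSim
end

section
/- Let Γ be a group which is not finitely generated, let A be a finite alphabet, and let Y ⊆ A^Γ be a nonempty sofic Γ-subshift. Then either Y is a singleton or Y is uncountable. -/
open scoped Pointwise

namespace SelfSim

section Aux

lemma exists_cyl_subset {ι B : Type*} [TopologicalSpace B] [DiscreteTopology B]
    {x : ι → B} {U : Set (ι → B)} (hU : U ∈ nhds x) :
    ∃ D : Finset ι, {y : ι → B | ∀ i ∈ D, y i = x i} ⊆ U := by
  rw [nhds_pi] at hU
  rw [Filter.mem_pi] at hU
  obtain ⟨I, hI, t, ht, hsub⟩ := hU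
  refine ⟨hI.toFinset, fun y hy => hsub fun i hi => ?_⟩
  have : y i = x i := hy i (hI.mem_toFinset.mpr hi)
  rw [this]
  have := ht i
  rwa [nhds_discrete, Filter.mem_pure] at this

lemma exists_finset_determines {G B C : Type*} [DecidableEq G] [TopologicalSpace B]
    [DiscreteTopology B] [TopologicalSpace C] [DiscreteTopology C]
    {Z : Set (G → B)} (hZc : IsCompact Z) {f : (G → B) → C}
    (hf : ContinuousOn f Z) :
    ∃ D : Finset G, ∀ x ∈ Z, ∀ x' ∈ Z, (∀ h ∈ D, x h = x' h) → f x = f x' := by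
  have key : ∀ z : G → B, z ∈ Z → ∃ D : Finset G,
      ∀ y ∈ Z, (∀ i ∈ D, y i = z i) → f y = f z := by
    intro z hz
    have h1 : f ⁻¹' {f z} ∈ nhdsWithin z Z := hf z hz ((isOpen_discrete {f z}).mem_nhds rfl)
    rw [mem_nhdsWithin] at h1
    obtain ⟨U, hUo, hzU, hsub⟩ := h1
    obtain ⟨D, hD⟩ := exists_cyl_subset (hUo.mem_nhds hzU)
    exact ⟨D, fun y hy hyD => hsub ⟨hD hyD, hy⟩⟩
  choose D hD using key
  have hcov : Z ⊆ ⋃ z : Z, {y : G → B | ∀ i ∈ D z z.2, y i = (z : G → B) i} := by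
    intro x hx
    exact Set.mem_iUnion.mpr ⟨⟨x, hx⟩, fun i _ => rfl⟩
  have hopen : ∀ z : Z, IsOpen {y : G → B | ∀ i ∈ D z z.2, y i = (z : G → B) i} := by
    intro z
    have : {y : G → B | ∀ i ∈ D z z.2, y i = (z : G → B) i}
        = ⋂ i ∈ D z z.2, (fun y : G → B => y i) ⁻¹' {(z : G → B) i} := by
      ext y; simp [Set.mem_iInter]
    rw [this]
    exact isOpen_biInter_finset fun i _ => (continuous_apply i).isOpen_preimage _ (isOpen_discrete _)
  obtain ⟨t, ht⟩ := hZc.elim_finite_subcover _ hopen hcov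
  refine ⟨t.biUnion (fun z => D z z.2), fun x hx x' hx' hagree => ?_⟩
  obtain ⟨z, hzt, hxz⟩ : ∃ z ∈ t, ∀ i ∈ D z z.2, x i = (z : G → B) i := by
    have := ht hx
    simp only [Set.mem_iUnion, Finset.mem_coe] at this
    obtain ⟨z, hz1, hz2⟩ := this
    exact ⟨z, hz1, hz2⟩
  have hx'z : ∀ i ∈ D z z.2, x' i = (z : G → B) i := by
    intro i hi
    rw [← hagree i (Finset.mem_biUnion.mpr ⟨z, hzt, hi⟩)]
    exact hxz i hi
  rw [hD z z.2 x hx hxz, hD z z.2 x' hx' hx'z]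

lemma isSFT_closed {G : Type*} [Group G] {k : ℕ} {Z : Set (G → Fin k)} (h : IsSFT Z) :
    IsClosed Z := by
  obtain ⟨F, L, hFL⟩ := h
  have : Z = ⋂ g : G, (fun x : G → Fin k => (fun h : ↥F => x (g * (h : G)))) ⁻¹' L := by
    ext x; simp [hFL, Set.mem_iInter]
  rw [this]
  refine isClosed_iInter fun g => IsClosed.preimage ?_ (isClosed_discrete _)
  exact continuous_pi fun h => continuous_apply _

lemma isSFT_shift_mem {G : Type*} [Group G] {k : ℕ} {Z : Set (G → Fin k)} (hZ : IsSFT Z)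
    (g : G) {x : G → Fin k} (hx : x ∈ Z) : shift g x ∈ Z := by
  obtain ⟨F, L, hFL⟩ := hZ
  rw [hFL]
  intro g'
  have : (fun h : ↥F => shift g x (g' * (h : G))) = fun h : ↥F => x ((g⁻¹ * g') * (h : G)) := by
    funext h; simp [shift, mul_assoc]
  rw [this]
  exact (hFL x).mp hx (g⁻¹ * g')

lemma not_countable_of_inj {α β : Type*} [Infinite α] {Y : Set β} {f : Set α → β}
    (hmaps : ∀ S, f S ∈ Y) (hinj : Function.Injective f) : ¬ Y.Countable := by
  intro hc
  have : Countable Y := hc.to_subtype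
  have hinj2 : Function.Injective (fun S : Set α => (⟨f S, hmaps S⟩ : Y)) :=
    fun S S' h => hinj (congrArg Subtype.val h)
  have : Countable (Set α) := Function.Injective.countable hinj2
  obtain ⟨g, hg⟩ := this.exists_injective_nat'
  exact Function.cantor_injective ((Infinite.natEmbedding α) ∘ g)
    ((Infinite.natEmbedding α).injective.comp hg)

lemma infinite_quot {G : Type*} [Group G] (hfg : ¬ Group.FG G) (E : Set G) (hE : E.Finite) :
    Infinite (G ⧸ Subgroup.closure E) := by
  set H := Subgroup.closure E
  rw [← not_finite_iff_infinite]
  intro hfin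
  apply hfg
  rw [Group.fg_iff]
  refine ⟨E ∪ Set.range (Quotient.out : G ⧸ H → G), ?_, hE.union (Set.finite_range _)⟩
  rw [eq_top_iff]
  intro g _
  set t := (QuotientGroup.mk g : G ⧸ H).out with ht
  have h1 : (QuotientGroup.mk t : G ⧸ H) = QuotientGroup.mk g := Quotient.out_eq _
  have h2 : t⁻¹ * g ∈ H := QuotientGroup.eq.mp h1
  have h3 : t ∈ Subgroup.closure (E ∪ Set.range (Quotient.out : G ⧸ H → G)) :=
    Subgroup.subset_closure (Set.mem_union_right _ ⟨_, rfl⟩)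
  have h4 : t⁻¹ * g ∈ Subgroup.closure (E ∪ Set.range (Quotient.out : G ⧸ H → G)) :=
    Subgroup.closure_mono Set.subset_union_left h2
  have := mul_mem h3 h4
  rwa [mul_inv_cancel_left] at this

end Aux

/-- A nonempty sofic subshift over a group which is not finitely generated is
a singleton or uncountable. -/

theorem sofic_subshift_singleton_or_uncountable
    (G : Type*) [Group G] (hfg : ¬ Group.FG G)
    (A : Type*) [TopologicalSpace A] [DiscreteTopology A] [Finite A]
    (Y : Set (G → A)) (hne : Y.Nonempty) (hsofic : IsSofic Y) :
    (∃ y, Y = {y}) ∨ ¬ Y.Countable := by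
  classical
  by_cases hsub : ∀ y₁ ∈ Y, ∀ y₂ ∈ Y, y₁ = y₂
  · left
    obtain ⟨y, hy⟩ := hne
    exact ⟨y, Set.eq_singleton_iff_unique_mem.mpr ⟨hy, fun z hz => hsub z hz y hy⟩⟩
  right
  push_neg at hsub
  obtain ⟨y₁, hy₁, y₂, hy₂, hne12⟩ := hsub
  obtain ⟨k, Z, φ, hSFT, hcont, hmaps, hsurj, hequiv⟩ := hsofic
  have hSFT' := hSFT
  obtain ⟨g₀, hg₀⟩ : ∃ g, y₁ g ≠ y₂ g := by
    by_contra h; push_neg at h; exact hne12 (funext h)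
  obtain ⟨x₁', hx₁', hφ₁'⟩ := hsurj hy₁
  obtain ⟨x₂', hx₂', hφ₂'⟩ := hsurj hy₂
  set x₁ := shift g₀⁻¹ x₁' with hx₁def
  set x₂ := shift g₀⁻¹ x₂' with hx₂def
  have hx₁ : x₁ ∈ Z := isSFT_shift_mem hSFT _ hx₁'
  have hx₂ : x₂ ∈ Z := isSFT_shift_mem hSFT _ hx₂'
  have hb₁ : φ x₁ 1 = y₁ g₀ := by
    rw [hx₁def, hequiv g₀⁻¹ x₁' hx₁', hφ₁']
    simp [shift]
  have hb₂ : φ x₂ 1 = y₂ g₀ := by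
    rw [hx₂def, hequiv g₀⁻¹ x₂' hx₂', hφ₂']
    simp [shift]
  have hb : φ x₁ 1 ≠ φ x₂ 1 := by rw [hb₁, hb₂]; exact hg₀
  have hZcomp : IsCompact Z := (isSFT_closed hSFT).isCompact
  have hcont1 : ContinuousOn (fun x : G → Fin k => φ x 1) Z :=
    (continuous_apply (1 : G)).comp_continuousOn hcont
  obtain ⟨D, hD⟩ := exists_finset_determines hZcomp hcont1
  obtain ⟨F, L, hFL⟩ := hSFT
  set H := Subgroup.closure ((F : Set G) ∪ (D : Set G)) with hHdef
  haveI : Infinite (G ⧸ H) := infinite_quot hfg _ (F.finite_toSet.union D.finite_toSet)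
  have hFH : ∀ h : G, h ∈ F → h ∈ H :=
    fun h hh => Subgroup.subset_closure (Set.mem_union_left _ hh)
  have hDH : ∀ h : G, h ∈ D → h ∈ H :=
    fun h hh => Subgroup.subset_closure (Set.mem_union_right _ hh)
  set r : G ⧸ H → G := Quotient.out with hrdef
  have hr : ∀ q : G ⧸ H, (QuotientGroup.mk (r q) : G ⧸ H) = q := fun q => Quotient.out_eq q
  have hmk_mul : ∀ (g h : G), h ∈ H →
      (QuotientGroup.mk (g * h) : G ⧸ H) = QuotientGroup.mk g := by
    intro g h hh
    symm
    rw [QuotientGroup.eq]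
    simpa using hh
  set xc : Set (G ⧸ H) → (G → Fin k) := fun S g =>
    (if QuotientGroup.mk g ∈ S then x₁ else x₂) ((r (QuotientGroup.mk g))⁻¹ * g) with hxc
  have hxcZ : ∀ S, xc S ∈ Z := by
    intro S
    rw [hFL]
    intro g
    set q := (QuotientGroup.mk g : G ⧸ H) with hq
    have key : (fun h : ↥F => xc S (g * (h : G)))
        = fun h : ↥F => (if q ∈ S then x₁ else x₂) (((r q)⁻¹ * g) * (h : G)) := by
      funext h
      have hmk : (QuotientGroup.mk (g * (h : G)) : G ⧸ H) = q := hmk_mul g h (hFH h h.2)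
      simp only [hxc, hmk, mul_assoc]
    rw [key]
    by_cases hqS : q ∈ S
    · simp only [hqS, if_true]
      exact (hFL x₁).mp hx₁ _
    · simp only [hqS, if_false]
      exact (hFL x₂).mp hx₂ _
  have hval : ∀ S q, φ (xc S) (r q) = (if q ∈ S then φ x₁ 1 else φ x₂ 1) := by
    intro S q
    have hshiftZ : shift (r q)⁻¹ (xc S) ∈ Z := isSFT_shift_mem hSFT' _ (hxcZ S)
    have h1 : φ (xc S) (r q) = φ (shift (r q)⁻¹ (xc S)) 1 := by
      rw [hequiv (r q)⁻¹ (xc S) (hxcZ S)]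
      simp [shift]
    rw [h1]
    have hagree : ∀ h ∈ D, shift (r q)⁻¹ (xc S) h = (if q ∈ S then x₁ else x₂) h := by
      intro h hh
      have hmk : (QuotientGroup.mk ((r q) * h) : G ⧸ H) = q := by
        rw [hmk_mul _ h (hDH h hh), hr]
      simp only [shift, inv_inv, hxc, hmk]
      rw [inv_mul_cancel_left]
    by_cases hqS : q ∈ S
    · simp only [hqS, if_true] at hagree ⊢
      exact hD _ hshiftZ _ hx₁ hagree
    · simp only [hqS, if_false] at hagree ⊢
      exact hD _ hshiftZ _ hx₂ hagree
  refine not_countable_of_inj (f := fun S => φ (xc S)) (fun S => hmaps (hxcZ S)) ?_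
  intro S S' hSS'
  ext q
  replace hSS' : φ (xc S) = φ (xc S') := hSS'
  have hv := congrFun hSS' (r q)
  rw [hval S q, hval S' q] at hv
  by_cases h1 : q ∈ S <;> by_cases h2 : q ∈ S' <;> simp [h1, h2] at hv ⊢
  · exact hb hv
  · exact hb hv.symm


end SelfSim
end

section
/- Suppose Γ is a group generated by a finite set S ∋ 1 which admits a faithful effectively closed action Γ ↷ X on a closed subset X ⊆ {0,1}^ℕ. Then the word problem of Γ is in Π⁰₂: there exists a decidable relation R on triples (w, m, n), where w ranges over words over S and m, n over natural numbers, such that a word w evaluates to the identity of Γ if and only if for every m there exists n with R(w, m, n). -/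
open scoped Pointwise

namespace SelfSim

open Nat.Partrec (Code)
open Nat.Partrec.Code

section Combinatorics
variable {β : Type*}

/-- All lists of length `n` with entries from `L`. -/
def powList (L : List β) : ℕ → List (List β)
  | 0 => [[]]
  | n + 1 => (powList L n).flatMap fun l => L.map (· :: l)

theorem mem_powList {L : List β} :
    ∀ {n : ℕ} {p : List β}, p ∈ powList L n ↔ p.length = n ∧ ∀ a ∈ p, a ∈ L := by
  intro n
  induction n with
  | zero =>
    intro p
    simp only [powList, List.mem_singleton]
    constructor
    · rintro rfl; simp
    · rintro ⟨h, -⟩; exact List.length_eq_zero_iff.1 h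
  | succ n ih =>
    intro p
    simp only [powList, List.mem_flatMap, List.mem_map]
    constructor
    · rintro ⟨l, hl, a, ha, rfl⟩
      obtain ⟨h1, h2⟩ := ih.1 hl
      exact ⟨by simp [h1], by simpa [ha] using h2⟩
    · rintro ⟨hlen, hall⟩
      cases p with
      | nil => simp at hlen
      | cons a l =>
        refine ⟨l, ih.2 ⟨by simpa using hlen, fun b hb => hall b (by simp [hb])⟩, a, hall a (by simp), rfl⟩

theorem powList_primrec [Primcodable β] (L : List β) : Primrec (powList L) := by
  have hstep : Primrec₂ (fun (_ : ℕ) (IH : List (List β)) =>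
      IH.flatMap fun l => L.map (· :: l)) := by
    have hinner : Primrec₂ (fun (_ : ℕ × List (List β)) (l : List β) => L.map (· :: l)) :=
      Primrec.list_map (Primrec.const L)
        (Primrec.list_cons.comp Primrec.snd (Primrec.snd.comp Primrec.fst))
    exact (Primrec.list_flatMap Primrec.snd hinner).comp
      (Primrec.fst.pair Primrec.snd) |>.to₂
  exact (Primrec.nat_rec₁ [[]] hstep).of_eq fun n => by
    induction n with
    | zero => simp [powList]
    | succ n ih => simp [powList, ih]

theorem primrec_list_all {α : Type*} [Primcodable α] [Primcodable β]
    {L : α → List β} {p : α → β → Bool} (hL : Primrec L) (hp : Primrec₂ p) :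
    Primrec fun a => (L a).all (p a) := by
  have : Primrec fun a => (L a).foldr (fun b r => p a b && r) true := by
    have h : Primrec₂ (fun (a : α) (br : β × Bool) => p a br.1 && br.2) :=
      ((Primrec.dom_bool₂ (· && ·)).comp
        (hp.comp Primrec.fst (Primrec.fst.comp Primrec.snd))
        (Primrec.snd.comp Primrec.snd)).to₂
    exact Primrec.list_foldr hL (Primrec.const true) h
  refine this.of_eq fun a => ?_
  induction (L a) with
  | nil => rfl
  | cons b l ih => simp [List.all_cons, ih]

theorem primrec_list_any {α : Type*} [Primcodable α] [Primcodable β]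
    {L : α → List β} {p : α → β → Bool} (hL : Primrec L) (hp : Primrec₂ p) :
    Primrec fun a => (L a).any (p a) := by
  have : Primrec fun a => (L a).foldr (fun b r => p a b || r) false := by
    have h : Primrec₂ (fun (a : α) (br : β × Bool) => p a br.1 || br.2) :=
      ((Primrec.dom_bool₂ (· || ·)).comp
        (hp.comp Primrec.fst (Primrec.fst.comp Primrec.snd))
        (Primrec.snd.comp Primrec.snd)).to₂
    exact Primrec.list_foldr hL (Primrec.const false) h
  refine this.of_eq fun a => ?_
  induction (L a) with
  | nil => rfl
  | cons b l ih => simp [List.any_cons, ih]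

end Combinatorics

section Machine
variable {m : ℕ}

/-- Entry `y_j(t)` of a flattened chain word `p` (block size `k+1`). -/
def entry (p : List (Fin m → Bool)) (k j t : ℕ) : Fin m → Bool :=
  p.getD ((k + 1) * t + j) default

/-- The length-`L` prefix of the `j`-th strand of the flattened chain `p`. -/
def extr (p : List (Fin m → Bool)) (k j L : ℕ) : List (Fin m → Bool) :=
  (List.range L).map fun t => entry p k j t

/-- Stage-`st` verification that the word `v` is forbidden. -/
def Dc (c : Code) (v : List (Fin m → Bool)) (st : ℕ) : Bool :=
  (evaln st c (@Encodable.encode _ (Primcodable.toEncodable) v)).isSome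

/-- `p` codes a locally consistent chain for the word `w` at level `N`, disagreeing at
coordinate `n`, with no strand-prefix verified forbidden by stage `N`. -/
def goodB (i₀ : Fin m) (c : Code) (w : List (Fin m)) (n N : ℕ)
    (p : List (Fin m → Bool)) : Bool :=
  ((List.range w.length).all fun j => (List.range N).all fun t =>
      entry p w.length (j + 1) t (w.getD j i₀) == entry p w.length j t i₀) &&
  (!(decide (n < N)) ||
      !(entry p w.length 0 n i₀ == entry p w.length w.length n i₀)) &&
  !((List.range (w.length + 1)).any fun j => (List.range (N + 1)).any fun L =>
      (List.range (N + 1)).any fun st => Dc c (extr p w.length j L) st)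

/-- No good chain of level `t.2.2` exists for the word `t.1` at coordinate `t.2.1`. -/
noncomputable def RB (i₀ : Fin m) (c : Code) (t : List (Fin m) × ℕ × ℕ) : Bool :=
  (powList ((Finset.univ : Finset (Fin m → Bool)).toList) ((t.1.length + 1) * t.2.2)).all
    fun p => !(goodB i₀ c t.1 t.2.1 t.2.2 p)

theorem goodB_eq_true_iff {i₀ : Fin m} {c : Code} {w : List (Fin m)} {n N : ℕ}
    {p : List (Fin m → Bool)} :
    goodB i₀ c w n N p = true ↔
      (∀ j < w.length, ∀ t < N,
          entry p w.length (j + 1) t (w.getD j i₀) = entry p w.length j t i₀) ∧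
      (n < N → entry p w.length 0 n i₀ ≠ entry p w.length w.length n i₀) ∧
      (∀ j < w.length + 1, ∀ L < N + 1, ∀ st < N + 1,
          Dc c (extr p w.length j L) st = false) := by
  simp only [goodB, Bool.and_eq_true, Bool.or_eq_true, Bool.not_eq_true',
    List.all_eq_true, List.any_eq_false, List.mem_range, beq_iff_eq,
    beq_eq_false_iff_ne, ne_eq, decide_eq_false_iff_not, not_lt, Bool.not_eq_true]
  constructor
  · rintro ⟨⟨hc, hd⟩, hf⟩
    refine ⟨hc, fun hn => ?_, fun j hj L hL st hst => ?_⟩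
    · rcases hd with h | h
      · omega
      · exact h
    · have := hf j hj L hL st hst
      simpa using this
  · rintro ⟨hc, hd, hf⟩
    refine ⟨⟨hc, ?_⟩, fun j hj L hL st hst => ?_⟩
    · by_cases hn : n < N
      · exact Or.inr (hd hn)
      · exact Or.inl (by omega)
    · simpa using hf j hj L hL st hst

theorem RB_eq_true_iff {i₀ : Fin m} {c : Code} {w : List (Fin m)} {n N : ℕ} :
    RB i₀ c (w, n, N) = true ↔
      ∀ p : List (Fin m → Bool), p.length = (w.length + 1) * N →
        goodB i₀ c w n N p = false := by
  simp only [RB, List.all_eq_true, Bool.not_eq_true']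
  constructor
  · intro h p hp
    exact h p (mem_powList.2 ⟨hp, fun a _ => by simp⟩)
  · intro h p hp
    exact h p (mem_powList.1 hp).1

private abbrev τ (m : ℕ) : Type := List (Fin m) × ℕ × ℕ
private abbrev αB (m : ℕ) : Type := Fin m → Bool

set_option maxHeartbeats 1000000 in
theorem RB_primrec (i₀ : Fin m) (c : Code) : Primrec (RB i₀ c) := by
  have hw : Primrec (fun a : τ m => a.1) := Primrec.fst
  have hN : Primrec (fun a : τ m => a.2.2) := Primrec.snd.comp Primrec.snd
  have hk : Primrec (fun a : τ m => a.1.length) := Primrec.list_length.comp hw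
  have hentry : ∀ {γ : Type} [Primcodable γ] {P : γ → List (αB m)}
      {k j t : γ → ℕ} (_ : Primrec P) (_ : Primrec k) (_ : Primrec j) (_ : Primrec t),
      Primrec fun a => entry (P a) (k a) (j a) (t a) := by
    intro γ _ P k j t hP hk' hj ht
    exact (Primrec.list_getD default).comp hP
      (Primrec.nat_add.comp
        (Primrec.nat_mul.comp (Primrec.succ.comp hk') ht) hj)
  have hextr : ∀ {γ : Type} [Primcodable γ] {P : γ → List (αB m)}
      {k j L : γ → ℕ} (_ : Primrec P) (_ : Primrec k) (_ : Primrec j) (_ : Primrec L),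
      Primrec fun a => extr (P a) (k a) (j a) (L a) := by
    intro γ _ P k j L hP hk' hj hL
    refine Primrec.list_map (Primrec.list_range.comp hL) ?_
    exact (hentry (hP.comp Primrec.fst) (hk'.comp Primrec.fst)
      (hj.comp Primrec.fst) Primrec.snd).to₂
  have hDc : ∀ {γ : Type} [Primcodable γ] {v : γ → List (αB m)} {st : γ → ℕ}
      (_ : Primrec v) (_ : Primrec st), Primrec fun a => Dc c (v a) (st a) := by
    intro γ _ v st hv hst
    have hmid : Primrec fun a => evaln (st a) c (@Encodable.encode _ (Primcodable.toEncodable) (v a)) :=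
      (primrec_evaln.comp
        ((hst.pair (Primrec.const c)).pair (Primrec.encode.comp hv))).of_eq fun a => rfl
    exact Primrec.option_isSome.comp hmid
  have hgood : Primrec fun q : τ m × List (αB m) =>
      goodB i₀ c q.1.1 q.1.2.1 q.1.2.2 q.2 := by
    have hp : Primrec (fun q : τ m × List (αB m) => q.2) := Primrec.snd
    have hk2 : Primrec (fun q : τ m × List (αB m) => q.1.1.length) := hk.comp Primrec.fst
    have hn2 : Primrec (fun q : τ m × List (αB m) => q.1.2.1) :=
      (Primrec.fst.comp Primrec.snd).comp Primrec.fst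
    have hN2 : Primrec (fun q : τ m × List (αB m) => q.1.2.2) := hN.comp Primrec.fst
    have h1 : Primrec fun q : τ m × List (αB m) =>
        (List.range q.1.1.length).all fun j => (List.range q.1.2.2).all fun t =>
          entry q.2 q.1.1.length (j + 1) t (q.1.1.getD j i₀) ==
            entry q.2 q.1.1.length j t i₀ := by
      refine primrec_list_all (Primrec.list_range.comp hk2) ?_
      have A : Primrec fun r : (τ m × List (αB m)) × ℕ =>
          (List.range r.1.1.2.2).all fun t =>
            entry r.1.2 r.1.1.1.length (r.2 + 1) t (r.1.1.1.getD r.2 i₀) ==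
              entry r.1.2 r.1.1.1.length r.2 t i₀ := by
        refine primrec_list_all (Primrec.list_range.comp (hN2.comp Primrec.fst)) ?_
        have hq : Primrec (fun u : ((τ m × List (αB m)) × ℕ) × ℕ => u.1.1) :=
          Primrec.fst.comp Primrec.fst
        have hpr : Primrec (fun u : ((τ m × List (αB m)) × ℕ) × ℕ => u.1.1.2) :=
          Primrec.snd.comp hq
        have hwr : Primrec (fun u : ((τ m × List (αB m)) × ℕ) × ℕ => u.1.1.1.1) :=
          Primrec.fst.comp (Primrec.fst.comp hq)
        have hkr : Primrec (fun u : ((τ m × List (αB m)) × ℕ) × ℕ => u.1.1.1.1.length) :=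
          Primrec.list_length.comp hwr
        have hjr : Primrec (fun u : ((τ m × List (αB m)) × ℕ) × ℕ => u.1.2) :=
          Primrec.snd.comp Primrec.fst
        have htr : Primrec (fun u : ((τ m × List (αB m)) × ℕ) × ℕ => u.2) := Primrec.snd
        have B : Primrec fun u : ((τ m × List (αB m)) × ℕ) × ℕ =>
            (entry u.1.1.2 u.1.1.1.1.length (u.1.2 + 1) u.2 (u.1.1.1.1.getD u.1.2 i₀) ==
              entry u.1.1.2 u.1.1.1.1.length u.1.2 u.2 i₀) :=
          Primrec.beq.comp
            (Primrec.fin_app.comp (hentry hpr hkr (Primrec.succ.comp hjr) htr)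
              ((Primrec.list_getD i₀).comp hwr hjr))
            (Primrec.fin_app.comp (hentry hpr hkr hjr htr) (Primrec.const i₀))
        exact B.to₂
      exact A.to₂
    have h2 : Primrec fun q : τ m × List (αB m) =>
        (!(decide (q.1.2.1 < q.1.2.2)) ||
          !(entry q.2 q.1.1.length 0 q.1.2.1 i₀ ==
              entry q.2 q.1.1.length q.1.1.length q.1.2.1 i₀)) := by
      have ha : Primrec fun q : τ m × List (αB m) => decide (q.1.2.1 < q.1.2.2) :=
        (Primrec.nat_lt.comp hn2 hN2).decide
      have hb : Primrec fun q : τ m × List (αB m) =>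
          (entry q.2 q.1.1.length 0 q.1.2.1 i₀ ==
            entry q.2 q.1.1.length q.1.1.length q.1.2.1 i₀) :=
        Primrec.beq.comp
          (Primrec.fin_app.comp (hentry hp hk2 (Primrec.const 0) hn2) (Primrec.const i₀))
          (Primrec.fin_app.comp (hentry hp hk2 hk2 hn2) (Primrec.const i₀))
      exact (Primrec.dom_bool₂ (· || ·)).comp ((Primrec.dom_bool (!·)).comp ha)
        ((Primrec.dom_bool (!·)).comp hb)
    have h3 : Primrec fun q : τ m × List (αB m) =>
        (List.range (q.1.1.length + 1)).any fun j =>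
          (List.range (q.1.2.2 + 1)).any fun L =>
            (List.range (q.1.2.2 + 1)).any fun st =>
              Dc c (extr q.2 q.1.1.length j L) st := by
      refine primrec_list_any (Primrec.list_range.comp (Primrec.succ.comp hk2)) ?_
      have A : Primrec fun r : (τ m × List (αB m)) × ℕ =>
          (List.range (r.1.1.2.2 + 1)).any fun L =>
            (List.range (r.1.1.2.2 + 1)).any fun st =>
              Dc c (extr r.1.2 r.1.1.1.length r.2 L) st := by
        refine primrec_list_any
          (Primrec.list_range.comp (Primrec.succ.comp (hN2.comp Primrec.fst))) ?_
        have A2 : Primrec fun u : ((τ m × List (αB m)) × ℕ) × ℕ =>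
            (List.range (u.1.1.1.2.2 + 1)).any fun st =>
              Dc c (extr u.1.1.2 u.1.1.1.1.length u.1.2 u.2) st := by
          have htau : Primrec fun u : ((τ m × List (αB m)) × ℕ) × ℕ => u.1.1.1 :=
            Primrec.fst.comp (Primrec.fst.comp Primrec.fst)
          have hNr : Primrec fun u : ((τ m × List (αB m)) × ℕ) × ℕ => u.1.1.1.2.2 :=
            Primrec.snd.comp (Primrec.snd.comp htau)
          refine primrec_list_any (Primrec.list_range.comp (Primrec.succ.comp hNr)) ?_
          have hq : Primrec (fun u : (((τ m × List (αB m)) × ℕ) × ℕ) × ℕ => u.1.1.1) :=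
            Primrec.fst.comp (Primrec.fst.comp Primrec.fst)
          have hpr : Primrec (fun u : (((τ m × List (αB m)) × ℕ) × ℕ) × ℕ => u.1.1.1.2) :=
            Primrec.snd.comp hq
          have hkr : Primrec (fun u : (((τ m × List (αB m)) × ℕ) × ℕ) × ℕ => u.1.1.1.1.1.length) :=
            Primrec.list_length.comp (Primrec.fst.comp (Primrec.fst.comp hq))
          have hjr : Primrec (fun u : (((τ m × List (αB m)) × ℕ) × ℕ) × ℕ => u.1.1.2) :=
            Primrec.snd.comp (Primrec.fst.comp Primrec.fst)
          have hLr : Primrec (fun u : (((τ m × List (αB m)) × ℕ) × ℕ) × ℕ => u.1.2) :=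
            Primrec.snd.comp Primrec.fst
          have B : Primrec fun u : (((τ m × List (αB m)) × ℕ) × ℕ) × ℕ =>
              Dc c (extr u.1.1.1.2 u.1.1.1.1.1.length u.1.1.2 u.1.2) u.2 :=
            hDc (hextr hpr hkr hjr hLr) Primrec.snd
          exact B.to₂
        exact A2.to₂
      exact A.to₂
    exact ((Primrec.dom_bool₂ (· && ·)).comp
      ((Primrec.dom_bool₂ (· && ·)).comp h1 h2)
      ((Primrec.dom_bool (!·)).comp h3)).of_eq fun q => rfl
  refine (primrec_list_all
    ((powList_primrec _).comp
      (Primrec.nat_mul.comp (Primrec.succ.comp hk) hN)) ?_).of_eq fun a => rfl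
  exact ((Primrec.dom_bool (!·)).comp hgood).to₂


theorem pos_lt_block {k t j N : ℕ} (ht : t < N) (hj : j < k + 1) :
    (k + 1) * t + j < (k + 1) * N :=
  calc (k + 1) * t + j < (k + 1) * t + (k + 1) := by omega
    _ = (k + 1) * (t + 1) := by ring
    _ ≤ (k + 1) * N := Nat.mul_le_mul_left _ ht

theorem entry_take {m : ℕ} {p : List (Fin m → Bool)} {M k j t : ℕ}
    (h : (k + 1) * t + j < M) : entry (p.take M) k j t = entry p k j t := by
  unfold entry
  rw [List.getD_eq_getElem?_getD, List.getD_eq_getElem?_getD, List.getElem?_take, if_pos h]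

theorem entry_map_range {m : ℕ} (z : ℕ → (Fin m → Bool)) {M k j t : ℕ}
    (h : (k + 1) * t + j < M) :
    entry ((List.range M).map z) k j t = z ((k + 1) * t + j) := by
  unfold entry
  rw [List.getD_eq_getElem _ _ (by simpa using h)]
  simp

theorem extr_take {m : ℕ} {p : List (Fin m → Bool)} {k j L N : ℕ}
    (hj : j < k + 1) (hL : L ≤ N) :
    extr (p.take ((k + 1) * N)) k j L = extr p k j L := by
  unfold extr
  refine List.map_congr_left fun t ht => ?_
  exact entry_take (pos_lt_block (lt_of_lt_of_le (List.mem_range.1 ht) hL) hj)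

theorem extr_map_range {m : ℕ} (z : ℕ → (Fin m → Bool)) {k j L N : ℕ}
    (hj : j < k + 1) (hL : L ≤ N) :
    extr ((List.range ((k + 1) * N)).map z) k j L =
      (List.range L).map fun t => z ((k + 1) * t + j) := by
  unfold extr
  refine List.map_congr_left fun t ht => ?_
  exact entry_map_range z (pos_lt_block (lt_of_lt_of_le (List.mem_range.1 ht) hL) hj)

theorem goodB_mono {m : ℕ} {i₀ : Fin m} {c : Code} {w : List (Fin m)} {n : ℕ}
    {N N' : ℕ} (hNN : N ≤ N') {p : List (Fin m → Bool)}
    (h : goodB i₀ c w n N' p = true) :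
    goodB i₀ c w n N (p.take ((w.length + 1) * N)) = true := by
  obtain ⟨hc, hd, hf⟩ := goodB_eq_true_iff.1 h
  refine goodB_eq_true_iff.2 ⟨fun j hj t ht => ?_, fun hn => ?_, fun j hj L hL st hst => ?_⟩
  · rw [entry_take (pos_lt_block ht (by omega)), entry_take (pos_lt_block ht (by omega))]
    exact hc j hj t (lt_of_lt_of_le ht hNN)
  · rw [entry_take (pos_lt_block hn (by omega)), entry_take (pos_lt_block hn (by omega))]
    exact hd (lt_of_lt_of_le hn hNN)
  · rw [extr_take hj (by omega)]
    exact hf j hj L (by omega) st (by omega)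

/-- In a closed subset of a product space, exclusion is witnessed on a finite prefix. -/
theorem exists_prefix_disjoint {A : Type*} [TopologicalSpace A] {Z : Set (ℕ → A)}
    (hZ : IsClosed Z) {y : ℕ → A} (hy : y ∉ Z) :
    ∃ L, ∀ y' : ℕ → A, (∀ i < L, y' i = y i) → y' ∉ Z := by
  obtain ⟨I, u, hu, hsub⟩ := isOpen_pi_iff.1 hZ.isOpen_compl y hy
  refine ⟨I.sup id + 1, fun y' hy' hmem => ?_⟩
  refine hsub (Set.mem_pi.2 fun i hi => ?_) hmem
  rw [hy' i (Nat.lt_succ_of_le (Finset.le_sup (f := id) hi))]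
  exact (hu i hi).2

/-- König's lemma, specialized to levelwise conditions on words of length `K * N`. -/
theorem koenig {β : Type*} [Fintype β] [Nonempty β] (T : ℕ → List β → Prop) (K : ℕ)
    (hK : 0 < K)
    (hmono : ∀ {N N' : ℕ} {q : List β}, N ≤ N' → T N' q → T N (q.take (K * N)))
    (hne : ∀ N, ∃ q, q.length = K * N ∧ T N q) :
    ∃ z : ℕ → β, ∀ N, T N ((List.range (K * N)).map z) := by
  classical
  set V : List β → Prop := fun pq =>
    ∀ N, pq.length ≤ K * N → ∃ q, q.length = K * N ∧ T N q ∧ pq <+: q with hV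
  have hV0 : V [] := by
    intro N _
    obtain ⟨q, h1, h2⟩ := hne N
    exact ⟨q, h1, h2, List.nil_prefix⟩
  have hstep : ∀ pq, V pq → ∃ a, V (pq ++ [a]) := by
    intro pq hpq
    by_contra hcon
    push_neg at hcon
    have hsel : ∀ a : β, ∃ N, (pq ++ [a]).length ≤ K * N ∧
        ¬∃ q, q.length = K * N ∧ T N q ∧ (pq ++ [a]) <+: q := by
      intro a
      have h' : ¬ ∀ N, (pq ++ [a]).length ≤ K * N →
          ∃ q, q.length = K * N ∧ T N q ∧ (pq ++ [a]) <+: q := hcon a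
      push_neg at h'
      obtain ⟨N, h1, h2⟩ := h'
      exact ⟨N, h1, by push_neg; exact h2⟩
    choose f hf1 hf2 using hsel
    set Nstar := max (pq.length + 1) (Finset.univ.sup f) with hNs
    have hlen : pq.length + 1 ≤ K * Nstar := by
      have : Nstar ≤ K * Nstar := Nat.le_mul_of_pos_left _ hK
      omega
    obtain ⟨q, hq1, hq2, r, rfl⟩ := hpq Nstar (by omega)
    have hr : r ≠ [] := by
      rintro rfl
      simp at hq1
      omega
    obtain ⟨b, r', rfl⟩ := List.exists_cons_of_ne_nil hr
    refine hf2 b ⟨(pq ++ b :: r').take (K * f b), ?_, ?_, ?_⟩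
    · rw [List.length_take, hq1]
      exact Nat.min_eq_left (Nat.mul_le_mul_left _ (le_max_right _ _ |>.trans'
        (Finset.le_sup (Finset.mem_univ b))))
    · exact hmono (le_max_right _ _ |>.trans'  (Finset.le_sup (Finset.mem_univ b))) hq2
    · rw [List.prefix_take_iff]
      constructor
      · exact ⟨r', by simp⟩
      · have := hf1 b
        simpa using this
  set ext : List β → List β := fun pq =>
    if h : V pq then pq ++ [Classical.choose (hstep pq h)] else pq with hext
  set pref : ℕ → List β := fun n => Nat.rec [] (fun _ q => ext q) n with hpref
  have hprefsucc : ∀ n, pref (n + 1) = ext (pref n) := fun n => rfl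
  have hinv : ∀ n, V (pref n) ∧ (pref n).length = n := by
    intro n
    induction n with
    | zero => exact ⟨hV0, rfl⟩
    | succ n ih =>
      simp only [hprefsucc, hext]
      rw [dif_pos ih.1]
      exact ⟨Classical.choose_spec (hstep _ ih.1), by simp [ih.2]⟩
  set z : ℕ → β := fun t => (pref (t + 1)).getD t (Classical.arbitrary β) with hz
  have hagree : ∀ n, (List.range n).map z = pref n := by
    intro n
    induction n with
    | zero => rfl
    | succ n ih =>
      rw [List.range_succ, List.map_append, ih]
      have h1 : pref (n + 1) = pref n ++ [Classical.choose (hstep _ (hinv n).1)] := by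
        simp only [hprefsucc, hext]
        rw [dif_pos (hinv n).1]
      have h2 : z n = Classical.choose (hstep _ (hinv n).1) := by
        rw [hz]
        simp only [h1]
        rw [List.getD_eq_getElem _ _ (by simp [(hinv n).2])]
        have := (hinv n).2
        rw [List.getElem_concat_length this.symm]
      simp [h2, h1]
  refine ⟨z, fun N => ?_⟩
  rw [hagree]
  obtain ⟨q, hq1, hq2, hq3⟩ := (hinv (K * N)).1 N (by rw [(hinv (K * N)).2])
  have : pref (K * N) = q := hq3.eq_of_length (by rw [(hinv (K * N)).2, hq1])
  rw [this]
  exact hq2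

/-- Extract a primitive recursive stage-verification from an r.e. predicate. -/
theorem re_exists_stage {β : Type*} [Primcodable β] {p : β → Prop} (h : RE p) :
    ∃ c : Code, ∀ b : β,
      p b ↔ ∃ st, (evaln st c (@Encodable.encode _ Primcodable.toEncodable b)).isSome := by
  unfold RE at h
  unfold Partrec at h
  obtain ⟨c, hc⟩ := exists_code.1 h
  refine ⟨c, fun b => ?_⟩
  have hev : eval c (Encodable.encode b) =
      Part.bind ((Encodable.decode (α := β) (Encodable.encode b) : Option β) : Part β)
        fun a => (Part.assert (p a) fun _ => Part.some ()).map Encodable.encode := by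
    rw [hc]
  rw [Encodable.encodek] at hev
  simp only [Part.coe_some, Part.bind_eq_bind, Part.bind_some] at hev
  constructor
  · intro hp
    have hmem : Encodable.encode () ∈ eval c (Encodable.encode b) := by
      rw [hev]
      refine Part.mem_map _ ?_
      exact Part.mem_assert_iff.2 ⟨hp, Part.mem_some ()⟩
    obtain ⟨st, hst⟩ := evaln_complete.1 hmem
    exact ⟨st, by simp [Option.isSome_iff_exists]; exact ⟨_, hst⟩⟩
  · rintro ⟨st, hst⟩
    obtain ⟨v, hv⟩ := Option.isSome_iff_exists.1 hst
    have hmem : v ∈ eval c (Encodable.encode b) := evaln_sound hv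
    rw [hev] at hmem
    obtain ⟨u, hu, -⟩ := (Part.mem_map_iff _).1 hmem
    obtain ⟨hp, -⟩ := Part.mem_assert_iff.1 hu
    exact hp

end Machine


/-- Iterated application of the generators along a word. -/
def iterW {G : Type*} {m : ℕ} (s : Fin m → G) (act : G → (ℕ → Bool) → ℕ → Bool) :
    List (Fin m) → (ℕ → Bool) → (ℕ → Bool) :=
  fun v x => v.foldr (fun i y => act (s i) y) x

theorem iterW_nil {G : Type*} {m : ℕ} (s : Fin m → G) (act : G → (ℕ → Bool) → ℕ → Bool)
    (x : ℕ → Bool) : iterW s act [] x = x := rfl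

theorem iterW_cons {G : Type*} {m : ℕ} (s : Fin m → G) (act : G → (ℕ → Bool) → ℕ → Bool)
    (a : Fin m) (v : List (Fin m)) (x : ℕ → Bool) :
    iterW s act (a :: v) x = act (s a) (iterW s act v x) := rfl

theorem iterW_mem {G : Type*} [Group G] {m : ℕ} {s : Fin m → G}
    {act : G → (ℕ → Bool) → ℕ → Bool} {X : Set (ℕ → Bool)}
    (hmaps : ∀ g : G, Set.MapsTo (act g) X X) :
    ∀ (v : List (Fin m)) (x : ℕ → Bool), x ∈ X → iterW s act v x ∈ X := by
  intro v
  induction v with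
  | nil => intro x hx; exact hx
  | cons a v ih => intro x hx; exact hmaps (s a) (ih x hx)

theorem act_prod_eq_iterW {G : Type*} [Group G] {m : ℕ} {s : Fin m → G}
    {act : G → (ℕ → Bool) → ℕ → Bool} {X : Set (ℕ → Bool)}
    (_hmaps : ∀ g : G, Set.MapsTo (act g) X X)
    (hact1 : ∀ x ∈ X, act 1 x = x)
    (hactmul : ∀ (g h : G) (x : ℕ → Bool), x ∈ X → act (g * h) x = act g (act h x)) :
    ∀ (v : List (Fin m)) (x : ℕ → Bool), x ∈ X → act ((v.map s).prod) x = iterW s act v x := by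
  intro v
  induction v with
  | nil => intro x hx; simpa [iterW_nil] using hact1 x hx
  | cons a v ih =>
    intro x hx
    rw [List.map_cons, List.prod_cons, hactmul _ _ x hx, ih x hx, iterW_cons]

theorem mod_block {k t j : ℕ} (hj : j < k + 1) : ((k + 1) * t + j) % (k + 1) = j := by
  rw [Nat.mul_add_mod, Nat.mod_eq_of_lt hj]

theorem div_block {k t j : ℕ} (hj : j < k + 1) : ((k + 1) * t + j) / (k + 1) = t := by
  rw [Nat.mul_add_div (Nat.succ_pos k), Nat.div_eq_of_lt hj, add_zero]

/-- If a group generated by a finite set `S ∋ 1` admits a faithful effectively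
closed action on a closed subset of `{0,1}^ℕ`, then its word problem is in `Π⁰₂`. -/
theorem wordProblem_pi02_of_faithful_effClosed
    (G : Type*) [Group G] {m : ℕ} (s : Fin m → G)
    (X : Set (ℕ → Bool)) (act : G → (ℕ → Bool) → ℕ → Bool)
    (heff : IsEffClosedActionWith s act X)
    (hfaith : ∀ g : G, (∀ x ∈ X, act g x = x) → g = 1) :
    ∃ R : List (Fin m) → ℕ → ℕ → Prop,
      ComputablePred (fun t : List (Fin m) × ℕ × ℕ => R t.1 t.2.1 t.2.2) ∧
      ∀ w : List (Fin m), (w.map s).prod = 1 ↔ ∀ a : ℕ, ∃ b : ℕ, R w a b := by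
  classical
  obtain ⟨hXcl, ⟨hmaps, hact1, hactmul⟩, ⟨i₀, hi₀⟩, -, hYcl, hYre⟩ := heff
  obtain ⟨c, hc⟩ := re_exists_stage hYre
  have hDcP : ∀ (v : List (Fin m → Bool)) (st : ℕ), Dc c v st = true →
      ∀ y : ℕ → (Fin m → Bool), ExtendsWord y v → y ∉ SetRep s act X :=
    fun v st h => (hc v).2 ⟨st, h⟩
  have hPDc : ∀ v : List (Fin m → Bool),
      (∀ y : ℕ → (Fin m → Bool), ExtendsWord y v → y ∉ SetRep s act X) →
      ∃ st, Dc c v st = true := fun v h => (hc v).1 h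
  refine ⟨fun w n N => RB i₀ c (w, n, N) = true, ?_, fun w => ?_⟩
  · exact ComputablePred.computable_iff.2 ⟨fun t => RB i₀ c t, (RB_primrec i₀ c).to_comp, rfl⟩
  constructor
  · -- the word evaluates to 1: find, for each coordinate n, a verification level N
    intro hw n
    by_contra hno
    push_neg at hno
    have hne : ∀ N, ∃ q : List (Fin m → Bool), q.length = (w.length + 1) * N ∧
        goodB i₀ c w n N q = true := by
      intro N
      have h' := hno N
      rw [Ne, RB_eq_true_iff] at h'
      push_neg at h'
      obtain ⟨p, h1, h2⟩ := h'
      exact ⟨p, h1, by simpa using h2⟩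
    obtain ⟨z, hz⟩ := koenig (fun N q => goodB i₀ c w n N q = true) (w.length + 1)
      (Nat.succ_pos _) (fun hNN h => goodB_mono hNN h) hne
    -- consistency of the limit configuration
    have hcons : ∀ j < w.length, ∀ t,
        z ((w.length + 1) * t + (j + 1)) (w.getD j i₀) = z ((w.length + 1) * t + j) i₀ := by
      intro j hj t
      have h := (goodB_eq_true_iff.1 (hz (t + 1))).1 j hj t (Nat.lt_succ_self t)
      rwa [entry_map_range z (pos_lt_block (Nat.lt_succ_self t) (by omega)),
          entry_map_range z (pos_lt_block (Nat.lt_succ_self t) (by omega))] at h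
    have hdis : z ((w.length + 1) * n + 0) i₀ ≠ z ((w.length + 1) * n + w.length) i₀ := by
      have h := (goodB_eq_true_iff.1 (hz (n + 1))).2.1 (Nat.lt_succ_self n)
      rwa [entry_map_range z (pos_lt_block (Nat.lt_succ_self n) (by omega)),
          entry_map_range z (pos_lt_block (Nat.lt_succ_self n) (by omega))] at h
    have hforb : ∀ j ≤ w.length, ∀ L st : ℕ,
        Dc c ((List.range L).map fun t => z ((w.length + 1) * t + j)) st = false := by
      intro j hj L st
      have h := (goodB_eq_true_iff.1 (hz (max L st))).2.2 j (by omega) L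
        (by have := le_max_left L st; omega) st (by have := le_max_right L st; omega)
      rwa [extr_map_range z (by omega) (le_max_left L st)] at h
    -- each strand of the limit lies in the set representation
    have hYmem : ∀ j ≤ w.length,
        (fun t => z ((w.length + 1) * t + j)) ∈ SetRep s act X := by
      intro j hj
      by_contra hns
      obtain ⟨L, hL⟩ := exists_prefix_disjoint hYcl hns
      have hP : ∀ y' : ℕ → (Fin m → Bool),
          ExtendsWord y' ((List.range L).map fun t => z ((w.length + 1) * t + j)) →
          y' ∉ SetRep s act X := by
        intro y' he
        apply hL
        intro i hi
        have hlen : i < ((List.range L).map fun t => z ((w.length + 1) * t + j)).length := by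
          simpa using hi
        have := he ⟨i, hlen⟩
        simpa using this
      obtain ⟨st, hst⟩ := hPDc _ hP
      rw [hforb j hj L st] at hst
      exact absurd hst (by simp)
    -- extract the base points of each strand
    have hstrand : ∀ j ≤ w.length,
        (fun t => z ((w.length + 1) * t + j) i₀) ∈ X ∧
        ∀ i : Fin m, (fun t => z ((w.length + 1) * t + j) i) =
          act (s i) (fun t => z ((w.length + 1) * t + j) i₀) := by
      intro j hj
      obtain ⟨x, hxX, hx⟩ := hYmem j hj
      have hx0 : (fun t => z ((w.length + 1) * t + j) i₀) = x := by
        rw [hx i₀, hi₀]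
        exact hact1 x hxX
      refine ⟨by rw [hx0]; exact hxX, fun i => ?_⟩
      rw [hx i, hx0]
    have hchain : ∀ j < w.length,
        (fun t => z ((w.length + 1) * t + j) i₀) =
          act (s (w.getD j i₀)) (fun t => z ((w.length + 1) * t + (j + 1)) i₀) := by
      intro j hj
      have h2 := (hstrand (j + 1) (by omega)).2 (w.getD j i₀)
      rw [← h2]
      funext t
      exact (hcons j hj t).symm
    have hkey : ∀ d ≤ w.length,
        (fun t => z ((w.length + 1) * t + (w.length - d)) i₀) =
          iterW s act (w.drop (w.length - d))
            (fun t => z ((w.length + 1) * t + w.length) i₀) := by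
      intro d
      induction d with
      | zero => intro _; simp [iterW_nil, List.drop_length]
      | succ d ih =>
        intro hd
        have hlt : w.length - (d + 1) < w.length := by omega
        have heq : w.length - (d + 1) + 1 = w.length - d := by omega
        have hdrop : w.drop (w.length - (d + 1)) =
            w[w.length - (d + 1)] :: w.drop (w.length - (d + 1) + 1) :=
          List.drop_eq_getElem_cons hlt
        rw [hchain _ hlt, heq, ih (by omega), hdrop, heq, iterW_cons]
        rw [List.getD_eq_getElem w i₀ hlt]
    have hBX : (fun t => z ((w.length + 1) * t + w.length) i₀) ∈ X :=
      (hstrand w.length le_rfl).1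
    have h0 := hkey w.length le_rfl
    rw [Nat.sub_self, List.drop_zero] at h0
    rw [← act_prod_eq_iterW hmaps hact1 hactmul w _ hBX, hw, hact1 _ hBX] at h0
    exact hdis (by rw [Nat.add_zero] at hdis ⊢; exact congrFun h0 n)
  · -- conversely: levelwise verification forces the word to evaluate to 1
    intro h
    by_contra hg
    have hnot : ¬ ∀ x ∈ X, act ((w.map s).prod) x = x := fun hfix => hg (hfaith _ hfix)
    push_neg at hnot
    obtain ⟨x, hxX, hgx⟩ := hnot
    have hex : ∃ n, act ((w.map s).prod) x n ≠ x n := by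
      by_contra hno
      push_neg at hno
      exact hgx (funext hno)
    obtain ⟨n, hn⟩ := hex
    obtain ⟨N, hRB⟩ := h n
    rw [RB_eq_true_iff] at hRB
    set F : ℕ → (Fin m → Bool) := fun idx => fun i =>
      act (s i) (iterW s act (w.drop (idx % (w.length + 1))) x) (idx / (w.length + 1))
      with hF
    have hRBp := hRB ((List.range ((w.length + 1) * N)).map F) (by simp)
    have hentryF : ∀ j < w.length + 1, ∀ t < N,
        entry ((List.range ((w.length + 1) * N)).map F) w.length j t =
          fun i => act (s i) (iterW s act (w.drop j) x) t := by
      intro j hj t ht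
      rw [entry_map_range F (pos_lt_block ht hj), hF]
      simp only [mod_block hj, div_block hj]
    have hiterX : ∀ j : ℕ, iterW s act (w.drop j) x ∈ X :=
      fun j => iterW_mem hmaps _ x hxX
    have hproj : ∀ j : ℕ, act (s i₀) (iterW s act (w.drop j) x) =
        iterW s act (w.drop j) x := by
      intro j
      rw [hi₀]
      exact hact1 _ (hiterX j)
    have hgood : goodB i₀ c w n N ((List.range ((w.length + 1) * N)).map F) = true := by
      refine goodB_eq_true_iff.2 ⟨fun j hj t ht => ?_, fun hnN => ?_, fun j hj L hL st hst => ?_⟩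
      · rw [hentryF (j + 1) (by omega) t ht, hentryF j (by omega) t ht]
        have hdrop : w.drop j = w[j] :: w.drop (j + 1) := List.drop_eq_getElem_cons hj
        have hstep : iterW s act (w.drop j) x =
            act (s (w.getD j i₀)) (iterW s act (w.drop (j + 1)) x) := by
          rw [hdrop, iterW_cons, List.getD_eq_getElem w i₀ hj]
        show act (s (w.getD j i₀)) (iterW s act (w.drop (j + 1)) x) t =
          act (s i₀) (iterW s act (w.drop j) x) t
        rw [hproj j, hstep]
      · rw [hentryF 0 (by omega) n hnN, hentryF w.length (by omega) n hnN]
        intro hcontra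
        have h0 : act (s i₀) (iterW s act (w.drop 0) x) n =
            act (s i₀) (iterW s act (w.drop w.length) x) n := hcontra
        rw [congrFun (hproj 0) n, congrFun (hproj w.length) n] at h0
        rw [List.drop_zero] at h0
        rw [List.drop_length, iterW_nil] at h0
        rw [← act_prod_eq_iterW hmaps hact1 hactmul w x hxX] at h0
        exact hn h0
      · by_contra hcontra
        rw [Bool.not_eq_false] at hcontra
        have hnotY := hDcP _ _ hcontra (fun t i => act (s i) (iterW s act (w.drop j) x) t) ?_
        · exact hnotY ⟨iterW s act (w.drop j) x, hiterX j, fun i => rfl⟩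
        · have hext : extr ((List.range ((w.length + 1) * N)).map F) w.length j L =
              (List.range L).map fun t => fun i => act (s i) (iterW s act (w.drop j) x) t := by
            unfold extr
            refine List.map_congr_left fun t ht => ?_
            exact hentryF j hj t (lt_of_lt_of_le (List.mem_range.1 ht) (by omega))
          rw [hext]
          intro i
          simp
    rw [hRBp] at hgood
    exact absurd hgood (by simp)

end SelfSim
end
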